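/- Let O ⊆ (0,N)^d be an α-fat object (α ≥ 1) containing at least one integer point, and let l = ℓ(O) be the maximum level of integer points in O. Then the number of integer points in O of level exactly l is at most (4α+1)^d. -/

import Mathlib

noncomputable section

/-- Closed axis-parallel `d`-cube with lower corner `a` and side length `w`. -/
def Cube {d : ℕ} (a : Fin d → ℝ) (w : ℝ) : Set (Fin d → ℝ) :=
  {x | ∀ i, a i ≤ x i ∧ x i ≤ a i + w}

/-- Open axis-parallel `d`-cube with lower corner `a` and side length `w`. -/
def OpenCube {d : ℕ} (a : Fin d → ℝ) (w : ℝ) : Set (Fin d → ℝ) :=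
  {x | ∀ i, a i < x i ∧ x i < a i + w}

/-- The open box `(0,N)^d`. -/
def Box (d N : ℕ) : Set (Fin d → ℝ) :=
  {x | ∀ i, 0 < x i ∧ x i < N}

/-- The level of an integer point: minimum 2-adic valuation of its coordinates. -/
def level {d : ℕ} (q : Fin d → ℤ) : ℕ := ⨅ i, padicValInt 2 (q i)

/-- Embedding of integer points into `ℝ^d`. -/
def toRealPt {d : ℕ} (q : Fin d → ℤ) : Fin d → ℝ := fun i => (q i : ℝ)

/-- `w` is the out-width of `O`: side of the smallest enclosing axis-parallel cube. -/
def IsOutWidth {d : ℕ} (O : Set (Fin d → ℝ)) (w : ℝ) : Prop :=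
  (∃ a, O ⊆ Cube a w) ∧ ∀ w' a, O ⊆ Cube a w' → w ≤ w'

/-- `w` is the in-width of `O`: side of the largest inscribed axis-parallel cube. -/
def IsInWidth {d : ℕ} (O : Set (Fin d → ℝ)) (w : ℝ) : Prop :=
  (∃ a, Cube a w ⊆ O) ∧ ∀ w' a, Cube a w' ⊆ O → w' ≤ w

/-- `O` is `α`-fat: out-width at most `α` times in-width. -/
def IsFat {d : ℕ} (α : ℝ) (O : Set (Fin d → ℝ)) : Prop :=
  ∃ wo wi, IsOutWidth O wo ∧ IsInWidth O wi ∧ wo ≤ α * wi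

/-- Level of an object: maximum level of integer points inside it. -/
def objLevel {d : ℕ} (O : Set (Fin d → ℝ)) : ℕ :=
  sSup {l | ∃ q : Fin d → ℤ, toRealPt q ∈ O ∧ level q = l}

/-- Integer points of level exactly `l` inside `O`. -/
def lvlPts {d : ℕ} (l : ℕ) (O : Set (Fin d → ℝ)) : Set (Fin d → ℤ) :=
  {q | toRealPt q ∈ O ∧ level q = l}

/-- `H` hits `O`. -/
def hits {d : ℕ} (H : Set (Fin d → ℤ)) (O : Set (Fin d → ℝ)) : Prop :=
  ∃ q ∈ H, toRealPt q ∈ O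

/-- The hitting set maintained by the level-picking algorithm after `n` rounds. -/
def algoH {d : ℕ} (O : ℕ → Set (Fin d → ℝ)) : ℕ → Set (Fin d → ℤ)
  | 0 => ∅
  | n + 1 =>
      algoH O n ∪
        {q | ¬ hits (algoH O n) (O n) ∧ q ∈ lvlPts (objLevel (O n)) (O n)}
/-- an `α`-fat object `O ⊆ (0,N)^d` of maximum integer-point level `l`
contains at most `(4α+1)^d` integer points of level exactly `l`. -/
theorem few_top_level_points (d N : ℕ) (α : ℝ) (hα : 1 ≤ α) (O : Set (Fin d → ℝ))
    (hO : O ⊆ Box d N) (hfat : IsFat α O)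
    (l : ℕ) (q0 : Fin d → ℤ) (hq0 : toRealPt q0 ∈ O ∧ level q0 = l)
    (hmax : ∀ q : Fin d → ℤ, toRealPt q ∈ O → level q ≤ l) :
    (Set.ncard (lvlPts l O) : ℝ) ≤ (4 * α + 1) ^ d := by

  have hp : Fact (Nat.Prime 2) := ⟨Nat.prime_two⟩
  rcases Nat.eq_zero_or_pos d with hd | hd
  · subst hd
    have hsub : (lvlPts 0 O ∪ lvlPts l O).Finite := by
      apply Set.Finite.subset (Set.finite_univ (α := Fin 0 → ℤ))
      exact Set.subset_univ _
    have h1 : Set.ncard (lvlPts l O) ≤ 1 := by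
      rw [Set.ncard_le_one (hsub.subset Set.subset_union_right)]
      intro a _ b _
      funext i; exact i.elim0
    calc (Set.ncard (lvlPts l O) : ℝ) ≤ 1 := by exact_mod_cast h1
      _ = (4 * α + 1) ^ 0 := by norm_num
  have hne : Nonempty (Fin d) := Fin.pos_iff_nonempty.mp hd
  obtain ⟨wo, wi, ⟨⟨a, hOa⟩, _⟩, ⟨⟨b, hb⟩, _⟩, hwowi⟩ := hfat
  have hwo0 : 0 ≤ wo := by
    obtain ⟨i⟩ := hne
    have := hOa hq0.1 i
    linarith [this.1, this.2]
  have hwi0 : 0 ≤ wi := by nlinarith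
  have h2l : (0:ℝ) < 2 ^ l := by positivity
  -- key bound: wi ≤ 2 * 2^l
  have hwi : wi ≤ 2 * 2 ^ l := by
    by_cases h1 : wi < 1
    · have : (1:ℝ) ≤ 2 ^ l := one_le_pow₀ (by norm_num : (1:ℝ) ≤ 2)
      linarith
    push_neg at h1
    set m := ⌊wi⌋₊ with hm_def
    have hm1 : 1 ≤ m := Nat.le_floor (by exact_mod_cast h1)
    set k := Nat.log 2 m with hk_def
    have h2k : (2:ℝ) ^ k ≤ wi := by
      have h := Nat.pow_log_le_self 2 (show m ≠ 0 by omega)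
      calc (2:ℝ) ^ k = ((2 ^ k : ℕ) : ℝ) := by push_cast; ring
        _ ≤ (m : ℝ) := by exact_mod_cast h
        _ ≤ wi := Nat.floor_le hwi0
    have h2k' : wi < 2 ^ (k + 1) := by
      have h := Nat.lt_pow_succ_log_self (show 1 < 2 by norm_num) m
      have h2 : (m : ℝ) + 1 ≤ 2 ^ (k + 1) := by
        have : m + 1 ≤ 2 ^ (k + 1) := h
        calc (m:ℝ) + 1 = ((m + 1 : ℕ) : ℝ) := by push_cast; ring
          _ ≤ ((2 ^ (k+1) : ℕ) : ℝ) := by exact_mod_cast this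
          _ = 2 ^ (k+1) := by push_cast; ring
      linarith [Nat.lt_floor_add_one wi]
    -- construct an integer point of level ≥ k inside O
    have h2kpos : (0:ℝ) < 2 ^ k := by positivity
    set q : Fin d → ℤ := fun i => 2 ^ k * ⌈b i / 2 ^ k⌉ with hq_def
    have hqO : toRealPt q ∈ O := by
      apply hb
      intro i
      constructor
      · have := Int.le_ceil (b i / 2 ^ k)
        have : b i / 2 ^ k * 2 ^ k ≤ (⌈b i / 2 ^ k⌉ : ℝ) * 2 ^ k :=
          mul_le_mul_of_nonneg_right this (le_of_lt h2kpos)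
        rw [div_mul_cancel₀ _ (ne_of_gt h2kpos)] at this
        simpa [toRealPt, hq_def, mul_comm] using this
      · have hc := Int.ceil_lt_add_one (b i / 2 ^ k)
        have : (⌈b i / 2 ^ k⌉ : ℝ) * 2 ^ k < (b i / 2 ^ k + 1) * 2 ^ k :=
          mul_lt_mul_of_pos_right hc h2kpos
        rw [add_mul, div_mul_cancel₀ _ (ne_of_gt h2kpos), one_mul] at this
        have h2 : (2:ℝ) ^ k ≤ wi := h2k
        have : (toRealPt q i : ℝ) ≤ b i + wi := by
          simp only [toRealPt, hq_def]
          push_cast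
          nlinarith
        exact this
    have hqne : ∀ i, q i ≠ 0 := by
      intro i
      have := (hO hqO i).1
      intro h0
      rw [show toRealPt q i = ((q i : ℤ) : ℝ) from rfl, h0] at this
      simp at this
    have hlev : k ≤ level q := by
      apply le_ciInf
      intro i
      have hdvd : ((2:ℕ):ℤ) ^ k ∣ q i := ⟨⌈b i / 2 ^ k⌉, by push_cast; ring⟩
      rcases (padicValInt_dvd_iff k (q i)).mp hdvd with h | h
      · exact absurd h (hqne i)
      · exact h
    have hkl : k ≤ l := le_trans hlev (hmax q hqO)
    have hlt : wi < 2 * 2 ^ l := by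
      calc wi < 2 ^ (k + 1) := h2k'
        _ ≤ 2 ^ (l + 1) := by
            apply pow_le_pow_right₀ (by norm_num : (1:ℝ) ≤ 2)
            omega
        _ = 2 * 2 ^ l := by ring
    linarith
  have hwo : wo ≤ 2 * α * 2 ^ l := by nlinarith
  -- counting
  set c : Fin d → ℤ := fun i => ⌈a i / 2 ^ l⌉ with hc_def
  set C : Fin d → ℤ := fun i => ⌊(a i + wo) / 2 ^ l⌋ with hC_def
  set F : Finset (Fin d → ℤ) := Fintype.piFinset fun i => Finset.Icc (c i) (C i) with hF_def
  have hdvd_of_mem : ∀ q : Fin d → ℤ, q ∈ lvlPts l O → ∀ i, (2:ℤ) ^ l ∣ q i := by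
    intro q hq i
    have hle : l ≤ padicValInt 2 (q i) := by
      have := ciInf_le (OrderBot.bddBelow _) (f := fun i => padicValInt 2 (q i)) i
      rw [show (⨅ i, padicValInt 2 (q i)) = level q from rfl, hq.2] at this
      exact this
    have := (padicValInt_dvd_iff (p := 2) l (q i)).mpr (Or.inr hle)
    exact_mod_cast this
  have key : Set.ncard (lvlPts l O) ≤ F.card := by
    rw [← Set.ncard_coe_finset F]
    apply Set.ncard_le_ncard_of_injOn (fun q i => q i / 2 ^ l)
    · intro q hq
      simp only [hF_def, Finset.coe_sort_coe, Finset.mem_coe, Fintype.mem_piFinset]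
      intro i
      have hdvd := hdvd_of_mem q hq i
      have heq : (2:ℤ) ^ l * (q i / 2 ^ l) = q i := Int.mul_ediv_cancel' hdvd
      have hai := hOa hq.1 i
      have heqR : ((q i : ℤ) : ℝ) = 2 ^ l * ((q i / 2 ^ l : ℤ) : ℝ) := by
        exact_mod_cast heq.symm
      rw [Finset.mem_Icc]
      constructor
      · rw [hc_def]
        apply Int.ceil_le.mpr
        rw [div_le_iff₀ h2l]
        have : a i ≤ ((q i : ℤ):ℝ) := hai.1
        rw [heqR] at this
        linarith [this]
      · rw [hC_def]
        apply Int.le_floor.mpr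
        rw [le_div_iff₀ h2l]
        have : ((q i : ℤ):ℝ) ≤ a i + wo := hai.2
        rw [heqR] at this
        linarith [this]
    · intro q1 h1 q2 h2 heq
      funext i
      have e1 : (2:ℤ) ^ l * (q1 i / 2 ^ l) = q1 i := Int.mul_ediv_cancel' (hdvd_of_mem q1 h1 i)
      have e2 : (2:ℤ) ^ l * (q2 i / 2 ^ l) = q2 i := Int.mul_ediv_cancel' (hdvd_of_mem q2 h2 i)
      have := congrFun heq i
      simp only at this
      rw [← e1, ← e2, this]
  have hcard : (F.card : ℝ) ≤ (4 * α + 1) ^ d := by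
    rw [hF_def, Fintype.card_piFinset]
    push_cast
    calc (∏ i, ((Finset.Icc (c i) (C i)).card : ℝ))
        ≤ ∏ _i : Fin d, (4 * α + 1) := by
          apply Finset.prod_le_prod
          · intro i _; positivity
          · intro i _
            rw [Int.card_Icc]
            rcases le_or_gt (C i + 1 - c i) 0 with h | h
            · rw [Int.toNat_of_nonpos h]
              push_cast
              nlinarith
            · have htn : (((C i + 1 - c i).toNat : ℕ) : ℝ) = (C i : ℝ) + 1 - c i := by
                rw [show (((C i + 1 - c i).toNat : ℕ) : ℝ)
                      = (((C i + 1 - c i).toNat : ℤ) : ℝ) from by push_cast; ring,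
                    Int.toNat_of_nonneg (le_of_lt h)]
                push_cast; ring
              rw [htn]
              have hCle : (C i : ℝ) ≤ (a i + wo) / 2 ^ l := Int.floor_le _
              have hcge : a i / 2 ^ l ≤ (c i : ℝ) := Int.le_ceil _
              have : (C i : ℝ) + 1 - c i ≤ wo / 2 ^ l + 1 := by
                have : (a i + wo) / 2 ^ l - a i / 2 ^ l = wo / 2 ^ l := by
                  field_simp; ring
                linarith
              have hdiv : wo / 2 ^ l ≤ 2 * α := by
                rw [div_le_iff₀ h2l]; linarith
              linarith
      _ = (4 * α + 1) ^ d := by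
          rw [Finset.prod_const]
          simp
  calc (Set.ncard (lvlPts l O) : ℝ) ≤ (F.card : ℝ) := by exact_mod_cast key
    _ ≤ (4 * α + 1) ^ d := hcard
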